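/- Let V_− be a subspace of ℂ^{d1} ⊗ ℂ^{d2} containing no nonzero product vector, and let ε = sup{ ‖𝔄(Φ)‖²_op : Φ ∈ V_−, ‖Φ‖ = 1 } where 𝔄(Φ) is the coordinate matrix and ‖·‖_op the operator norm. Then ε < 1, and the Hermitian operator W = ε·I − P_{V_−} (P_{V_−} the orthogonal projection onto V_−) satisfies ⟨Ψ|W|Ψ⟩ ≥ 0 for every product vector Ψ = φ ⊗ χ, while ⟨Φ|W|Φ⟩ < 0 for any unit vector Φ ∈ V_−; i.e., W is an entanglement witness. -/

import Mathlib

set_option maxHeartbeats 1000000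


open Matrix

/-- The coordinate matrix of a vector in `ℂ^{d1} ⊗ ℂ^{d2}`. -/
noncomputable def coordMat {d1 d2 : ℕ} (Ψ : EuclideanSpace ℂ (Fin d1 × Fin d2)) :
    Matrix (Fin d1) (Fin d2) ℂ :=
  Matrix.of fun i j => Ψ (i, j)

/-- The operator norm of a matrix (as an operator between Euclidean spaces), i.e. its
largest singular value. -/
noncomputable def opNorm {d1 d2 : ℕ} (M : Matrix (Fin d1) (Fin d2) ℂ) : ℝ :=
  ‖LinearMap.toContinuousLinearMap (Matrix.toEuclideanLin M)‖

/-- The simple tensor `φ ⊗ χ` as a vector of `ℂ^{d1} ⊗ ℂ^{d2}`. -/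
noncomputable def tensorVec {d1 d2 : ℕ} (φ : EuclideanSpace ℂ (Fin d1))
    (χ : EuclideanSpace ℂ (Fin d2)) : EuclideanSpace ℂ (Fin d1 × Fin d2) :=
  WithLp.toLp 2 (fun p : Fin d1 × Fin d2 => φ p.1 * χ p.2)

namespace PW
variable {d1 d2 : ℕ}

lemma sq_eq_to_eq {a b : ℝ} (ha : 0 ≤ a) (hb : 0 ≤ b) (h : a ^ 2 = b ^ 2) : a = b := by
  nlinarith

lemma sq_le_to_le {a b : ℝ} (ha : 0 ≤ a) (hb : 0 ≤ b) (h : a ^ 2 ≤ b ^ 2) : a ≤ b := by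
  nlinarith

lemma norm_tensorVec (φ : EuclideanSpace ℂ (Fin d1)) (χ : EuclideanSpace ℂ (Fin d2)) :
    ‖tensorVec φ χ‖ = ‖φ‖ * ‖χ‖ := by
  refine sq_eq_to_eq (norm_nonneg _) (mul_nonneg (norm_nonneg _) (norm_nonneg _)) ?_
  rw [PiLp.norm_sq_eq_of_L2, mul_pow, PiLp.norm_sq_eq_of_L2, PiLp.norm_sq_eq_of_L2,
    Finset.sum_mul_sum, Fintype.sum_prod_type]
  simp [tensorVec, mul_pow]

/-- the "row" vector `r_i` with `⟪r i, χ⟫ = (T χ) i`. -/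
noncomputable def row (Φ : EuclideanSpace ℂ (Fin d1 × Fin d2)) (i : Fin d1) :
    EuclideanSpace ℂ (Fin d2) := WithLp.toLp 2 (fun j => star (Φ (i, j)))

lemma apply_eq (Φ : EuclideanSpace ℂ (Fin d1 × Fin d2)) (χ : EuclideanSpace ℂ (Fin d2))
    (i : Fin d1) :
    LinearMap.toContinuousLinearMap (Matrix.toEuclideanLin (coordMat Φ)) χ i
      = (inner ℂ (row Φ i) χ : ℂ) := by
  simp [PiLp.inner_apply, row, coordMat]
  simp only [Matrix.mulVec, dotProduct, Matrix.of_apply]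
  exact Finset.sum_congr rfl fun _ _ => mul_comm _ _

lemma norm_sq_eq_rows (Φ : EuclideanSpace ℂ (Fin d1 × Fin d2)) :
    ‖Φ‖ ^ 2 = ∑ i, ‖row Φ i‖ ^ 2 := by
  rw [PiLp.norm_sq_eq_of_L2, Fintype.sum_prod_type]
  refine Finset.sum_congr rfl fun i _ => ?_
  rw [PiLp.norm_sq_eq_of_L2]
  simp [row]

lemma opNorm_le_norm (Φ : EuclideanSpace ℂ (Fin d1 × Fin d2)) :
    opNorm (coordMat Φ) ≤ ‖Φ‖ := by
  refine ContinuousLinearMap.opNorm_le_bound _ (norm_nonneg Φ) fun χ => ?_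
  refine sq_le_to_le (norm_nonneg _)
    (mul_nonneg (norm_nonneg _) (norm_nonneg _)) ?_
  rw [PiLp.norm_sq_eq_of_L2, mul_pow, norm_sq_eq_rows]
  rw [Finset.sum_mul]
  refine Finset.sum_le_sum fun i _ => ?_
  rw [apply_eq]
  have := norm_inner_le_norm (𝕜 := ℂ) (row Φ i) χ
  nlinarith [norm_nonneg (inner ℂ (row Φ i) χ : ℂ), norm_nonneg (row Φ i), norm_nonneg χ]

noncomputable def starVec {d : ℕ} (χ : EuclideanSpace ℂ (Fin d)) : EuclideanSpace ℂ (Fin d) :=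
  WithLp.toLp 2 (fun j => star (χ j))

lemma norm_starVec {d : ℕ} (χ : EuclideanSpace ℂ (Fin d)) : ‖starVec χ‖ = ‖χ‖ := by
  refine sq_eq_to_eq (norm_nonneg _) (norm_nonneg _) ?_
  rw [PiLp.norm_sq_eq_of_L2, PiLp.norm_sq_eq_of_L2]
  simp [starVec]

lemma inner_tensor_eq (Φ : EuclideanSpace ℂ (Fin d1 × Fin d2)) (φ : EuclideanSpace ℂ (Fin d1))
    (χ : EuclideanSpace ℂ (Fin d2)) :
    (inner ℂ (tensorVec φ χ) Φ : ℂ)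
      = inner ℂ φ (LinearMap.toContinuousLinearMap (Matrix.toEuclideanLin (coordMat Φ)) (starVec χ)) := by
  simp only [PiLp.inner_apply, RCLike.inner_apply]
  rw [Fintype.sum_prod_type]
  refine Finset.sum_congr rfl fun i _ => ?_
  have : (LinearMap.toContinuousLinearMap (Matrix.toEuclideanLin (coordMat Φ)) (starVec χ)) i
      = ∑ j, Φ (i, j) * star (χ j) := rfl
  rw [this, Finset.sum_mul]
  refine Finset.sum_congr rfl fun j _ => ?_
  simp [tensorVec]
  ring

lemma inner_tensor_le (Φ : EuclideanSpace ℂ (Fin d1 × Fin d2)) (φ : EuclideanSpace ℂ (Fin d1))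
    (χ : EuclideanSpace ℂ (Fin d2)) :
    ‖(inner ℂ Φ (tensorVec φ χ) : ℂ)‖ ≤ opNorm (coordMat Φ) * (‖φ‖ * ‖χ‖) := by
  rw [norm_inner_symm, inner_tensor_eq]
  calc ‖(inner ℂ φ (LinearMap.toContinuousLinearMap (Matrix.toEuclideanLin (coordMat Φ)) (starVec χ)) : ℂ)‖
      ≤ ‖φ‖ * ‖LinearMap.toContinuousLinearMap (Matrix.toEuclideanLin (coordMat Φ)) (starVec χ)‖ :=
        norm_inner_le_norm _ _
    _ ≤ ‖φ‖ * (opNorm (coordMat Φ) * ‖starVec χ‖) := by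
        refine mul_le_mul_of_nonneg_left ?_ (norm_nonneg _)
        exact ContinuousLinearMap.le_opNorm _ _
    _ = opNorm (coordMat Φ) * (‖φ‖ * ‖χ‖) := by rw [norm_starVec]; ring

lemma opNorm_lt_one {Vm : Submodule ℂ (EuclideanSpace ℂ (Fin d1 × Fin d2))}
    (hVm : ∀ (φ : EuclideanSpace ℂ (Fin d1)) (χ : EuclideanSpace ℂ (Fin d2)),
      tensorVec φ χ ∈ Vm → tensorVec φ χ = 0)
    {Φ : EuclideanSpace ℂ (Fin d1 × Fin d2)} (hΦ : Φ ∈ Vm) (hn : ‖Φ‖ = 1) :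
    opNorm (coordMat Φ) < 1 := by
  set T := LinearMap.toContinuousLinearMap (Matrix.toEuclideanLin (coordMat Φ)) with hT
  rcases Nat.eq_zero_or_pos d2 with hd2 | hd2
  · have hT0 : opNorm (coordMat Φ) ≤ 0 := by
      refine ContinuousLinearMap.opNorm_le_bound _ le_rfl fun χ => ?_
      have hχ : χ = 0 := by
        ext j; exact absurd (j.2.trans_eq hd2) (Nat.not_lt_zero _)
      simp [hχ]
    linarith
  have hle : opNorm (coordMat Φ) ≤ 1 := hn ▸ opNorm_le_norm Φ
  rcases lt_or_eq_of_le hle with h | h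
  · exact h
  exfalso
  -- find a maximizing unit vector χ₀
  have hsne : (Metric.sphere (0 : EuclideanSpace ℂ (Fin d2)) 1).Nonempty := by
    refine ⟨EuclideanSpace.single ⟨0, hd2⟩ (1 : ℂ), ?_⟩
    simp [EuclideanSpace.norm_single]
  obtain ⟨χ₀, hχ₀mem, hmax'⟩ :=
    (isCompact_sphere (0 : EuclideanSpace ℂ (Fin d2)) 1).exists_isMaxOn hsne
      (continuous_norm.comp T.continuous).continuousOn
  have hmax : ∀ χ ∈ Metric.sphere (0 : EuclideanSpace ℂ (Fin d2)) 1, ‖T χ‖ ≤ ‖T χ₀‖ :=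
    fun χ hχ => hmax' hχ
  have hχ₀ : ‖χ₀‖ = 1 := mem_sphere_zero_iff_norm.mp hχ₀mem
  have hnorm_le : ‖T‖ ≤ ‖T χ₀‖ := by
    refine ContinuousLinearMap.opNorm_le_bound _ (norm_nonneg _) fun y => ?_
    rcases eq_or_ne y 0 with rfl | hy
    · simp
    · have hyn : (0:ℝ) < ‖y‖ := norm_pos_iff.mpr hy
      have hu : ((‖y‖ : ℂ))⁻¹ • y ∈ Metric.sphere (0 : EuclideanSpace ℂ (Fin d2)) 1 := by
        rw [mem_sphere_zero_iff_norm, norm_smul]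
        simp [hyn.ne']
      have h2 := hmax _ hu
      rw [_root_.map_smul, norm_smul] at h2
      simp only [norm_inv, Complex.norm_real, norm_norm] at h2
      calc ‖T y‖ = ‖y‖ * (‖y‖⁻¹ * ‖T y‖) := by field_simp
        _ ≤ ‖y‖ * ‖T χ₀‖ := mul_le_mul_of_nonneg_left h2 (norm_nonneg _)
        _ = ‖T χ₀‖ * ‖y‖ := mul_comm _ _
  have hTn : ‖T‖ = 1 := h
  have hTχ₀ : ‖T χ₀‖ = 1 := by
    refine le_antisymm ?_ (hTn ▸ hnorm_le)
    calc ‖T χ₀‖ ≤ ‖T‖ * ‖χ₀‖ := T.le_opNorm χ₀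
      _ = 1 := by rw [hχ₀, hTn, mul_one]
  -- set up rows decomposition
  set c : Fin d1 → ℂ := fun i => inner ℂ χ₀ (row Φ i) with hc
  set w : Fin d1 → EuclideanSpace ℂ (Fin d2) := fun i => row Φ i - c i • χ₀ with hwdef
  have hinnself : (inner ℂ χ₀ χ₀ : ℂ) = 1 := by
    rw [inner_self_eq_norm_sq_to_K, hχ₀]; norm_num
  have h_orth0 : ∀ i, (inner ℂ χ₀ (w i) : ℂ) = 0 := by
    intro i
    show (inner ℂ χ₀ (row Φ i - c i • χ₀) : ℂ) = 0
    rw [inner_sub_right, inner_smul_right, hinnself, mul_one, sub_self]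
  have h_orth : ∀ i, (inner ℂ (c i • χ₀) (w i) : ℂ) = 0 := by
    intro i
    rw [inner_smul_left, h_orth0, mul_zero]
  have h_pyth : ∀ i, ‖row Φ i‖ ^ 2 = ‖c i‖ ^ 2 + ‖w i‖ ^ 2 := by
    intro i
    have hsum : row Φ i = c i • χ₀ + w i := by
      show row Φ i = c i • χ₀ + (row Φ i - c i • χ₀)
      rw [add_comm, sub_add_cancel]
    have hp := norm_add_sq_eq_norm_sq_add_norm_sq_of_inner_eq_zero _ _ (h_orth i)
    have hns : ‖c i • χ₀‖ = ‖c i‖ := by rw [norm_smul, hχ₀, mul_one]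
    rw [hsum]
    rw [hns] at hp
    nlinarith [hp]
  have h_c : ∀ i, T χ₀ i = star (c i) := by
    intro i
    rw [hT, apply_eq, ← inner_conj_symm]
    rfl
  have sum1 : ∑ i, ‖c i‖ ^ 2 = 1 := by
    have := PiLp.norm_sq_eq_of_L2 (fun _ : Fin d1 => ℂ) (T χ₀)
    rw [hTχ₀] at this
    simp only [h_c, norm_star] at this
    linarith [this]
  have sum2 : ∑ i, ‖row Φ i‖ ^ 2 = 1 := by
    have := norm_sq_eq_rows Φ
    rw [hn] at this
    linarith [this]
  have sumw : ∑ i, ‖w i‖ ^ 2 = 0 := by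
    have : ∑ i, ‖row Φ i‖ ^ 2 = ∑ i, ‖c i‖ ^ 2 + ∑ i, ‖w i‖ ^ 2 := by
      rw [← Finset.sum_add_distrib]
      exact Finset.sum_congr rfl fun i _ => h_pyth i
    linarith
  have hw0 : ∀ i, w i = 0 := by
    intro i
    have h0 : ‖w i‖ ^ 2 = 0 := by
      have := (Finset.sum_eq_zero_iff_of_nonneg (fun i _ => sq_nonneg ‖w i‖)).mp sumw i
        (Finset.mem_univ i)
      exact this
    have : ‖w i‖ = 0 := by nlinarith [norm_nonneg (w i)]
    exact norm_eq_zero.mp this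
  -- Φ is a product vector
  have hΦprod : Φ = tensorVec (WithLp.toLp 2 (fun i => star (c i))) (starVec χ₀) := by
    ext p
    obtain ⟨i, j⟩ := p
    have hrow : row Φ i = c i • χ₀ := by
      have := hw0 i
      rw [hwdef] at this
      have := sub_eq_zero.mp this
      exact this
    have hj := congrArg (fun v : EuclideanSpace ℂ (Fin d2) => v j) hrow
    have : star (Φ (i, j)) = c i * χ₀ j := hj
    calc Φ (i, j) = star (star (Φ (i, j))) := (star_star _).symm
      _ = star (c i * χ₀ j) := by rw [this]
      _ = star (c i) * star (χ₀ j) := by rw [StarMul.star_mul, mul_comm]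
  have := hVm _ _ (hΦprod ▸ hΦ)
  rw [← hΦprod] at this
  rw [this] at hn
  simp at hn


noncomputable def coordLin (d1 d2 : ℕ) :
    EuclideanSpace ℂ (Fin d1 × Fin d2) →ₗ[ℂ] Matrix (Fin d1) (Fin d2) ℂ where
  toFun := coordMat
  map_add' _ _ := rfl
  map_smul' _ _ := rfl

noncomputable def coordL (d1 d2 : ℕ) :
    EuclideanSpace ℂ (Fin d1 × Fin d2) →ₗ[ℂ]
      (EuclideanSpace ℂ (Fin d2) →L[ℂ] EuclideanSpace ℂ (Fin d1)) :=
  (LinearMap.toContinuousLinearMap.toLinearMap.comp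
    Matrix.toEuclideanLin.toLinearMap).comp (coordLin d1 d2)

lemma coordL_apply (Φ : EuclideanSpace ℂ (Fin d1 × Fin d2)) :
    ‖coordL d1 d2 Φ‖ = opNorm (coordMat Φ) := rfl

lemma opNorm_nonneg (M : Matrix (Fin d1) (Fin d2) ℂ) : 0 ≤ opNorm M := norm_nonneg _

lemma inner_proj (Vm : Submodule ℂ (EuclideanSpace ℂ (Fin d1 × Fin d2)))
    (Ψ : EuclideanSpace ℂ (Fin d1 × Fin d2)) :
    (inner ℂ Ψ ((Vm.orthogonalProjection Ψ : EuclideanSpace ℂ (Fin d1 × Fin d2))) : ℂ)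
      = ((‖(Vm.orthogonalProjection Ψ : EuclideanSpace ℂ (Fin d1 × Fin d2))‖ : ℝ) : ℂ) ^ 2 := by
  set P := (Vm.orthogonalProjection Ψ : EuclideanSpace ℂ (Fin d1 × Fin d2)) with hP
  have hdec : (inner ℂ Ψ P : ℂ) = inner ℂ P P + (inner ℂ (Ψ - P) P : ℂ) := by
    rw [← inner_add_left, add_comm, sub_add_cancel]
  rw [hdec, hP, show (inner ℂ (Ψ - (Vm.orthogonalProjection Ψ : EuclideanSpace ℂ (Fin d1 × Fin d2))) (Vm.orthogonalProjection Ψ : EuclideanSpace ℂ (Fin d1 × Fin d2)) : ℂ) = 0 from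
      Vm.starProjection_inner_eq_zero Ψ _ (SetLike.coe_mem _), add_zero,
    inner_self_eq_norm_sq_to_K]
  norm_num

lemma proj_inner (Vm : Submodule ℂ (EuclideanSpace ℂ (Fin d1 × Fin d2)))
    (Ψ : EuclideanSpace ℂ (Fin d1 × Fin d2)) :
    (inner ℂ ((Vm.orthogonalProjection Ψ : EuclideanSpace ℂ (Fin d1 × Fin d2))) Ψ : ℂ)
      = ((‖(Vm.orthogonalProjection Ψ : EuclideanSpace ℂ (Fin d1 × Fin d2))‖ : ℝ) : ℂ) ^ 2 := by
  rw [← inner_conj_symm, inner_proj]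
  simp [← Complex.ofReal_pow]

end PW

/-- Let `V₋` contain no nonzero product vector and let
`ε = sup { ‖𝔄(Φ)‖²_op : Φ ∈ V₋, ‖Φ‖ = 1 }`. Then `ε < 1`, and `W = ε·I − P_{V₋}` is
nonnegative on product vectors but negative on unit vectors of `V₋`: an entanglement
witness. -/
theorem projection_witness (d1 d2 : ℕ)
    (Vm : Submodule ℂ (EuclideanSpace ℂ (Fin d1 × Fin d2)))
    (hVm : ∀ (φ : EuclideanSpace ℂ (Fin d1)) (χ : EuclideanSpace ℂ (Fin d2)),
      tensorVec φ χ ∈ Vm → tensorVec φ χ = 0)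
    (ε : ℝ)
    (hε : ε = sSup {x : ℝ | ∃ Φ ∈ Vm, ‖Φ‖ = 1 ∧ x = (opNorm (coordMat Φ)) ^ 2})
    (W : EuclideanSpace ℂ (Fin d1 × Fin d2) →L[ℂ] EuclideanSpace ℂ (Fin d1 × Fin d2))
    (hW : W = (ε : ℂ) • ContinuousLinearMap.id ℂ (EuclideanSpace ℂ (Fin d1 × Fin d2)) -
      Vm.subtypeL.comp (Vm.orthogonalProjection)) :
    ε < 1 ∧
    (∀ (φ : EuclideanSpace ℂ (Fin d1)) (χ : EuclideanSpace ℂ (Fin d2)),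
      0 ≤ (inner ℂ (tensorVec φ χ) (W (tensorVec φ χ)) : ℂ).re) ∧
    (∀ Φ ∈ Vm, ‖Φ‖ = 1 → (inner ℂ Φ (W Φ) : ℂ).re < 0) := by
  set S := {x : ℝ | ∃ Φ ∈ Vm, ‖Φ‖ = 1 ∧ x = (opNorm (coordMat Φ)) ^ 2} with hS
  have hSnn : ∀ x ∈ S, 0 ≤ x := by
    rintro x ⟨Φ, hΦ, hΦn, rfl⟩
    positivity
  have hSlt : ∀ x ∈ S, x < 1 := by
    rintro x ⟨Φ, hΦ, hΦn, rfl⟩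
    have h1 := PW.opNorm_lt_one hVm hΦ hΦn
    have h0 := PW.opNorm_nonneg (coordMat Φ)
    nlinarith
  have hbdd : BddAbove S := ⟨1, fun x hx => le_of_lt (hSlt x hx)⟩
  have hεnn : 0 ≤ ε := hε ▸ Real.sSup_nonneg hSnn
  -- ε < 1
  have hε1 : ε < 1 := by
    set K := (Vm : Set (EuclideanSpace ℂ (Fin d1 × Fin d2))) ∩ Metric.sphere 0 1 with hK
    by_cases hne : K.Nonempty
    · have hKc : IsCompact K :=
        (isCompact_sphere (0 : EuclideanSpace ℂ (Fin d1 × Fin d2)) 1).inter_left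
          (Submodule.closed_of_finiteDimensional Vm)
      have himg : S = (fun Φ => (opNorm (coordMat Φ)) ^ 2) '' K := by
        ext x
        constructor
        · rintro ⟨Φ, hΦ, hΦn, rfl⟩
          exact ⟨Φ, ⟨hΦ, mem_sphere_zero_iff_norm.mpr hΦn⟩, rfl⟩
        · rintro ⟨Φ, ⟨hΦ, hΦs⟩, rfl⟩
          exact ⟨Φ, hΦ, mem_sphere_zero_iff_norm.mp hΦs, rfl⟩
      have hcont : Continuous fun Φ : EuclideanSpace ℂ (Fin d1 × Fin d2)
          => (opNorm (coordMat Φ)) ^ 2 := by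
        have h1 : Continuous (PW.coordL d1 d2) :=
          (PW.coordL d1 d2).continuous_of_finiteDimensional
        have h2 : Continuous fun Φ => ‖PW.coordL d1 d2 Φ‖ := h1.norm
        exact h2.pow 2
      have hSc : IsCompact S := himg ▸ hKc.image hcont
      obtain ⟨Φ₀, hΦ₀⟩ := hne
      have hSne : S.Nonempty := himg ▸ ⟨_, Φ₀, hΦ₀, rfl⟩
      have hmem : sSup S ∈ S := hSc.sSup_mem hSne
      rw [hε]
      exact hSlt _ hmem
    · have hSe : S = ∅ := by
        rw [Set.eq_empty_iff_forall_notMem]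
        rintro x ⟨Φ, hΦ, hΦn, rfl⟩
        exact hne ⟨Φ, hΦ, mem_sphere_zero_iff_norm.mpr hΦn⟩
      rw [hε, hSe, Real.sSup_empty]
      norm_num
  -- quadratic form formula
  have hproj : ∀ Ψ : EuclideanSpace ℂ (Fin d1 × Fin d2),
      (inner ℂ Ψ (W Ψ) : ℂ).re
        = ε * ‖Ψ‖ ^ 2 - ‖(Vm.orthogonalProjection Ψ : EuclideanSpace ℂ (Fin d1 × Fin d2))‖ ^ 2 := by
    intro Ψ
    rw [hW]
    simp only [ContinuousLinearMap.sub_apply, ContinuousLinearMap.smul_apply,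
      ContinuousLinearMap.id_apply, ContinuousLinearMap.comp_apply, Submodule.subtypeL_apply]
    rw [inner_sub_right, inner_smul_right, inner_self_eq_norm_sq_to_K, PW.inner_proj]
    norm_cast
    simp [Complex.sub_re, Complex.mul_re, ← Complex.ofReal_pow]
  refine ⟨hε1, ?_, ?_⟩
  · -- nonnegative on product vectors
    intro φ χ
    rw [hproj]
    set Ψ := tensorVec φ χ with hΨ
    set P := (Vm.orthogonalProjection Ψ : EuclideanSpace ℂ (Fin d1 × Fin d2)) with hP
    rcases eq_or_ne P 0 with hP0 | hP0
    · rw [hP0]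
      simp only [norm_zero]
      have : (0:ℝ) ≤ ε * ‖Ψ‖ ^ 2 := mul_nonneg hεnn (sq_nonneg _)
      nlinarith
    · have hPn : (0:ℝ) < ‖P‖ := norm_pos_iff.mpr hP0
      set Φ₀ : EuclideanSpace ℂ (Fin d1 × Fin d2) := ((‖P‖ : ℂ))⁻¹ • P with hΦ₀
      have hΦ₀mem : Φ₀ ∈ Vm := Vm.smul_mem _ (SetLike.coe_mem _)
      have hΦ₀n : ‖Φ₀‖ = 1 := by
        rw [hΦ₀, norm_smul]
        simp [hPn.ne']
      have hmemS : (opNorm (coordMat Φ₀)) ^ 2 ∈ S := ⟨Φ₀, hΦ₀mem, hΦ₀n, rfl⟩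
      have hle' : (opNorm (coordMat Φ₀)) ^ 2 ≤ ε := hε ▸ le_csSup hbdd hmemS
      have hinner : (inner ℂ Φ₀ Ψ : ℂ) = ((‖P‖ : ℝ) : ℂ) := by
        rw [hΦ₀, inner_smul_left, hP, PW.proj_inner]
        rw [← hP]
        rw [map_inv₀, Complex.conj_ofReal]
        rw [← Complex.ofReal_pow]
        rw [← Complex.ofReal_inv, ← Complex.ofReal_mul]
        congr 1
        field_simp
      have hnormi : ‖(inner ℂ Φ₀ Ψ : ℂ)‖ = ‖P‖ := by
        rw [hinner, Complex.norm_real, Real.norm_eq_abs, abs_of_pos hPn]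
      have hb := PW.inner_tensor_le Φ₀ φ χ
      rw [← hΨ, hnormi, ← PW.norm_tensorVec φ χ, ← hΨ] at hb
      have h0 := PW.opNorm_nonneg (coordMat Φ₀)
      nlinarith [norm_nonneg Ψ, sq_nonneg ‖Ψ‖]
  · -- negative on Vm unit vectors
    intro Φ hΦ hΦn
    rw [hproj]
    rw [show (Vm.orthogonalProjection Φ : EuclideanSpace ℂ (Fin d1 × Fin d2)) = Φ from
      Vm.starProjection_eq_self_iff.mpr hΦ, hΦn]
    nlinarith
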